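/- Let 0 < v < 1, 0 < r < 1, s > 0, a > 1 with a·r < 1, and suppose r·v + s > 1, s < r·v, and r > v. Let B = [−1,1] × [−v,v], S(x₁,x₂) = (r·x₂+s, r·x₁), and S∘T(x₁,x₂) = (−a·r·x₂ − s, −a·r·x₁). Then S(B) ∪ (S∘T)(B) ⊇ B. -/

import Mathlib

open Set in
/-- Under the parameter conditions, the images of the box `B = [-1,1] × [-v,v]`
under `S` and `S ∘ T` together cover `B`. -/
theorem affine_images_cover_box
    (r s v a : ℝ) (hr0 : 0 < r) (hr1 : r < 1) (hs : 0 < s) (ha : 1 < a)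
    (har : a * r < 1) (hv0 : 0 < v) (hv1 : v < 1)
    (h1 : r * v + s > 1) (h2 : s < r * v) (h3 : r > v)
    (S ST : EuclideanSpace ℝ (Fin 2) → EuclideanSpace ℝ (Fin 2))
    (hS : ∀ x, S x 0 = r * x 1 + s ∧ S x 1 = r * x 0)
    (hST : ∀ x, ST x 0 = -(a * r) * x 1 - s ∧ ST x 1 = -(a * r) * x 0) :
    {x : EuclideanSpace ℝ (Fin 2) | x 0 ∈ Icc (-1 : ℝ) 1 ∧ x 1 ∈ Icc (-v) v} ⊆
      S '' {x | x 0 ∈ Icc (-1 : ℝ) 1 ∧ x 1 ∈ Icc (-v) v} ∪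
        ST '' {x | x 0 ∈ Icc (-1 : ℝ) 1 ∧ x 1 ∈ Icc (-v) v} := by
  have har0 : 0 < a * r := by positivity
  rintro y ⟨⟨hy0l, hy0r⟩, hy1l, hy1r⟩
  by_cases hc : s - r * v ≤ y 0
  · -- use S : preimage (y1/r, (y0 - s)/r)
    left
    refine ⟨WithLp.toLp 2 (fun i : Fin 2 => if i = 0 then y 1 / r else (y 0 - s) / r), ⟨⟨?_, ?_⟩, ?_, ?_⟩, ?_⟩
    · simp only [if_pos rfl, if_true]
      rw [le_div_iff₀ hr0]; nlinarith
    · simp only [if_pos rfl, if_true]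
      rw [div_le_iff₀ hr0]; nlinarith
    · simp only [if_neg (by decide : (1 : Fin 2) ≠ 0)]
      rw [le_div_iff₀ hr0]; nlinarith
    · simp only [if_neg (by decide : (1 : Fin 2) ≠ 0)]
      rw [div_le_iff₀ hr0]; nlinarith
    · obtain ⟨h0, h1⟩ := hS (WithLp.toLp 2 (fun i : Fin 2 => if i = 0 then y 1 / r else (y 0 - s) / r))
      ext i
      have hi : i = 0 ∨ i = 1 := by omega
      rcases hi with rfl | rfl
      · rw [h0]; simp only [if_neg (by decide : (1 : Fin 2) ≠ 0)]
        field_simp; ring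
      · rw [h1]; simp only [if_pos rfl, if_true]
        field_simp
  · -- use ST : preimage (-(y1)/(a*r), -(y0 + s)/(a*r))
    right
    push_neg at hc
    refine ⟨WithLp.toLp 2 (fun i : Fin 2 => if i = 0 then -(y 1) / (a * r) else -(y 0 + s) / (a * r)),
      ⟨⟨?_, ?_⟩, ?_, ?_⟩, ?_⟩
    · simp only [if_pos rfl, if_true]
      rw [le_div_iff₀ har0]; nlinarith
    · simp only [if_pos rfl, if_true]
      rw [div_le_iff₀ har0]; nlinarith
    · simp only [if_neg (by decide : (1 : Fin 2) ≠ 0)]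
      rw [le_div_iff₀ har0]; nlinarith
    · simp only [if_neg (by decide : (1 : Fin 2) ≠ 0)]
      rw [div_le_iff₀ har0]; nlinarith
    · obtain ⟨h0, h1⟩ := hST (WithLp.toLp 2 (fun i : Fin 2 => if i = 0 then -(y 1) / (a * r) else -(y 0 + s) / (a * r)))
      ext i
      have hi : i = 0 ∨ i = 1 := by omega
      rcases hi with rfl | rfl
      · rw [h0]; simp only [if_neg (by decide : (1 : Fin 2) ≠ 0)]
        field_simp; ring
      · rw [h1]; simp only [if_pos rfl, if_true]
        field_simp
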